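/- If a sequence w̃ : ℕ → ℝ satisfies w̃_n ≥ w_n for all n ≥ 1, where w_n := 2 − √((n+1)/n) − √((n−1)/n), and ∑_{n=1}^∞ w̃_n |u_n|² ≤ ∑_{n=1}^∞ |u_n − u_{n−1}|² holds for every finitely supported complex sequence u with u_0 = 0, then ∑_{n=1}^∞ n (w̃_n − w_n) = 0. -/

import Mathlib

open Finset

/-- Harmonic numbers. -/
noncomputable def Hh (n : ℕ) : ℝ := ∑ i ∈ Finset.range n, (1 : ℝ)/(i+1)

lemma Hh_mono : Monotone Hh := by
  intro a b hab
  exact Finset.sum_le_sum_of_subset_of_nonneg (Finset.range_subset_range.2 hab)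
    (by intros; positivity)

lemma Hh_succ (n : ℕ) : Hh (n+1) = Hh n + 1/((n:ℝ)+1) := by
  simp [Hh, Finset.sum_range_succ]

lemma Hh_tendsto : Filter.Tendsto Hh Filter.atTop Filter.atTop := by
  exact Filter.Tendsto.congr (fun n => by simp [Hh, one_div])
    Real.tendsto_sum_range_one_div_nat_succ_atTop

lemma clamp_lip (a b : ℝ) : |max 0 (min 1 a) - max 0 (min 1 b)| ≤ |a - b| := by
  calc |max 0 (min 1 a) - max 0 (min 1 b)|
      = |max (min 1 a) 0 - max (min 1 b) 0| := by rw [max_comm, max_comm (min 1 b)]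
    _ ≤ |min 1 a - min 1 b| := abs_max_sub_max_le_abs _ _ _
    _ ≤ max |1 - 1| |a - b| := abs_min_sub_min_le_max _ _ _ _
    _ = |a - b| := by simp

/-- `q n = √(n(n+1))`. -/
noncomputable def qq (n : ℕ) : ℝ := Real.sqrt ((n:ℝ) * ((n:ℝ)+1))

lemma qq_zero : qq 0 = 0 := by simp [qq]

lemma qq_le (n : ℕ) : qq n ≤ (n:ℝ) + 1 := by
  rw [qq]
  calc Real.sqrt ((n:ℝ) * ((n:ℝ)+1)) ≤ Real.sqrt (((n:ℝ)+1) * ((n:ℝ)+1)) := by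
        apply Real.sqrt_le_sqrt; nlinarith [Nat.cast_nonneg (α := ℝ) n]
    _ = (n:ℝ)+1 := Real.sqrt_mul_self (by positivity)

lemma sqrt_mul_sqrt_succ (n : ℕ) : Real.sqrt (n:ℝ) * Real.sqrt ((n:ℝ)+1) = qq n := by
  rw [qq, Real.sqrt_mul (Nat.cast_nonneg n)]

/-- Key summation-by-parts / ground-state identity. -/
lemma key_identity (φ : ℕ → ℝ) (M : ℕ) :
    ∑ n ∈ Finset.range M, (Real.sqrt ((n:ℝ)+1) * φ (n+1) - Real.sqrt (n:ℝ) * φ n)^2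
    = ∑ n ∈ Finset.range M, ((2*((n:ℝ)+1) - qq (n+1) - qq n) * φ (n+1)^2
        + qq n * (φ (n+1) - φ n)^2) + (qq M - (M:ℝ)) * φ M ^ 2 := by
  induction M with
  | zero => simp [qq_zero]
  | succ M ih =>
    rw [Finset.sum_range_succ, Finset.sum_range_succ, ih]
    have ha : Real.sqrt ((M:ℝ)+1) ^ 2 = (M:ℝ)+1 := Real.sq_sqrt (by positivity)
    have hb : Real.sqrt (M:ℝ) ^ 2 = (M:ℝ) := Real.sq_sqrt (Nat.cast_nonneg M)
    have hab := sqrt_mul_sqrt_succ M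
    have hc : (((M:ℕ)+1 : ℕ) : ℝ) = (M:ℝ)+1 := by push_cast; ring
    rw [hc]
    linear_combination (φ (M+1))^2 * ha + (φ M)^2 * hb - 2 * φ (M+1) * φ M * hab

lemma mul_sqrt_div (a b : ℝ) (ha : 0 ≤ a) (hb : 0 < b) :
    b * Real.sqrt (a/b) = Real.sqrt (a*b) := by
  have hsb : Real.sqrt b ≠ 0 := by positivity
  have h := Real.mul_self_sqrt hb.le
  rw [Real.sqrt_div ha, Real.sqrt_mul ha]
  field_simp
  nlinarith [Real.sqrt_nonneg a, Real.sqrt_nonneg b]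

lemma Bw (n : ℕ) :
    ((n:ℝ)+1) * (2 - Real.sqrt (((n:ℝ)+2)/((n:ℝ)+1)) - Real.sqrt ((n:ℝ)/((n:ℝ)+1)))
      = 2*((n:ℝ)+1) - qq (n+1) - qq n := by
  have h1 : ((n:ℝ)+1) * Real.sqrt (((n:ℝ)+2)/((n:ℝ)+1)) = qq (n+1) := by
    rw [mul_sqrt_div _ _ (by positivity) (by positivity), qq]
    push_cast
    ring_nf
  have h2 : ((n:ℝ)+1) * Real.sqrt ((n:ℝ)/((n:ℝ)+1)) = qq n := by
    rw [mul_sqrt_div _ _ (Nat.cast_nonneg n) (by positivity), qq]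
  linear_combination -h1 - h2

lemma eps_le (wtilde : ℕ → ℝ)
    (hin : ∀ u : ℕ → ℂ, u 0 = 0 → (Function.support u).Finite →
      ∑' n : ℕ, wtilde (n + 1) * ‖u (n + 1)‖ ^ 2 ≤
        ∑' n : ℕ, ‖u (n + 1) - u n‖ ^ 2)
    (hw : ∀ n : ℕ, 2*((n:ℝ)+1) - qq (n+1) - qq n ≤ ((n:ℝ)+1) * wtilde (n+1))
    (k N M : ℕ) (hkN : k < N) (hNM : N < M) :
    ((k:ℝ)+1) * wtilde (k+1) - (2*((k:ℝ)+1) - qq (k+1) - qq k)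
      ≤ 1/(Hh M - Hh N) := by
  set D := Hh M - Hh N with hDdef
  have hD : 0 < D := by
    have h1 : Hh N < Hh (N+1) := by
      rw [Hh_succ]; have : (0:ℝ) < 1/((N:ℝ)+1) := by positivity
      linarith
    have h2 : Hh (N+1) ≤ Hh M := Hh_mono hNM
    simp only [hDdef]; linarith
  set φ : ℕ → ℝ := fun n => max 0 (min 1 ((Hh M - Hh n)/D)) with hφdef
  have hφ1 : ∀ n, n ≤ N → φ n = 1 := by
    intro n hn
    have h1 : 1 ≤ (Hh M - Hh n)/D := by
      rw [le_div_iff₀ hD]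
      have := Hh_mono hn
      simp only [hDdef]; linarith
    simp [hφdef, min_eq_left h1]
  have hφ0 : ∀ n, M ≤ n → φ n = 0 := by
    intro n hn
    have h1 : (Hh M - Hh n)/D ≤ 0 := by
      apply div_nonpos_of_nonpos_of_nonneg _ hD.le
      have := Hh_mono hn; linarith
    have h2 : min 1 ((Hh M - Hh n)/D) ≤ 0 := le_trans (min_le_right _ _) h1
    simp [hφdef, max_eq_left h2]
  have hφrange : ∀ n, 0 ≤ φ n := fun n => le_max_left _ _
  have hlip : ∀ n : ℕ, (φ (n+1) - φ n)^2 ≤ (1/(((n:ℝ)+1)*D))^2 := by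
    intro n
    have h := clamp_lip ((Hh M - Hh (n+1))/D) ((Hh M - Hh n)/D)
    have heq : (Hh M - Hh (n+1))/D - (Hh M - Hh n)/D = -(1/(((n:ℝ)+1)*D)) := by
      rw [Hh_succ]; field_simp; ring
    rw [heq, abs_neg] at h
    have habs : |1/(((n:ℝ)+1)*D)| = 1/(((n:ℝ)+1)*D) := abs_of_nonneg (by positivity)
    rw [habs] at h
    calc (φ (n+1) - φ n)^2 = |φ (n+1) - φ n|^2 := (sq_abs _).symm
      _ ≤ (1/(((n:ℝ)+1)*D))^2 := by
          apply pow_le_pow_left₀ (abs_nonneg _) h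
  have hdiff0 : ∀ n : ℕ, n + 1 ≤ N → φ (n+1) - φ n = 0 := by
    intro n h
    rw [hφ1 _ h, hφ1 _ (by omega)]; ring
  set f : ℕ → ℝ := fun n => Real.sqrt (n:ℝ) * φ n with hfdef
  have hfM : ∀ n, M ≤ n → f n = 0 := by
    intro n hn; simp [hfdef, hφ0 n hn]
  set u : ℕ → ℂ := fun n => ((f n : ℝ) : ℂ) with hudef
  have hu0 : u 0 = 0 := by simp [hudef, hfdef]
  have huM : ∀ n, M ≤ n → u n = 0 := by
    intro n hn; simp [hudef, hfM n hn]
  have hsupp : (Function.support u).Finite := by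
    apply Set.Finite.subset (Finset.range M).finite_toSet
    intro x hx
    simp only [Finset.coe_range, Set.mem_Iio]
    by_contra hc
    exact hx (huM x (by omega))
  have H := hin u hu0 hsupp
  have hL : ∑' n : ℕ, wtilde (n + 1) * ‖u (n + 1)‖ ^ 2
      = ∑ n ∈ Finset.range M, wtilde (n+1) * (((n:ℝ)+1) * φ (n+1)^2) := by
    rw [tsum_eq_sum (s := Finset.range M) (fun b hb => by
      rw [huM (b+1) (by simp at hb; omega)]; simp)]
    apply Finset.sum_congr rfl
    intro n _
    have : ‖u (n+1)‖ ^ 2 = f (n+1) ^ 2 := by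
      rw [hudef]; simp [Complex.norm_real, Real.norm_eq_abs, sq_abs]
    rw [this, hfdef]
    simp only [mul_pow]
    rw [Real.sq_sqrt (by positivity)]
    push_cast
    ring
  have hR : ∑' n : ℕ, ‖u (n + 1) - u n‖ ^ 2
      = ∑ n ∈ Finset.range M, (Real.sqrt ((n:ℝ)+1) * φ (n+1) - Real.sqrt (n:ℝ) * φ n)^2 := by
    rw [tsum_eq_sum (s := Finset.range M) (fun b hb => by
      have hb' : M ≤ b := by simp at hb; omega
      rw [huM (b+1) (by omega), huM b hb']; simp)]
    apply Finset.sum_congr rfl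
    intro n _
    have : u (n+1) - u n = (((f (n+1) - f n : ℝ)) : ℂ) := by
      rw [hudef]; push_cast; ring
    rw [this]
    simp only [Complex.norm_real, Real.norm_eq_abs, sq_abs, hfdef]
    push_cast
    ring
  rw [hL, hR, key_identity, hφ0 M le_rfl] at H
  simp only [ne_eq, OfNat.ofNat_ne_zero, not_false_eq_true, zero_pow, mul_zero, add_zero] at H
  rw [Finset.sum_add_distrib] at H
  -- bound the gradient-cutoff sum by 1/D
  have hq : ∑ n ∈ Finset.range M, qq n * (φ (n+1) - φ n)^2 ≤ 1/D := by
    have hsub : Finset.Ico N M ⊆ Finset.range M := by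
      intro x hx; simp at hx ⊢; omega
    have hzero : ∀ x ∈ Finset.range M, x ∉ Finset.Ico N M →
        qq x * (φ (x+1) - φ x)^2 = 0 := by
      intro x hx hx'
      have : x + 1 ≤ N := by simp at hx hx'; omega
      rw [hdiff0 x this]; ring
    rw [← Finset.sum_subset hsub hzero]
    calc ∑ n ∈ Finset.Ico N M, qq n * (φ (n+1) - φ n)^2
        ≤ ∑ n ∈ Finset.Ico N M, 1/(((n:ℝ)+1)*D^2) := by
          apply Finset.sum_le_sum
          intro n _
          calc qq n * (φ (n+1) - φ n)^2
              ≤ ((n:ℝ)+1) * (1/(((n:ℝ)+1)*D))^2 := by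
                apply mul_le_mul (qq_le n) (hlip n) (sq_nonneg _) (by positivity)
            _ = 1/(((n:ℝ)+1)*D^2) := by field_simp
      _ = (Hh M - Hh N)/D^2 := by
          rw [Hh, Hh, ← Finset.sum_Ico_eq_sub _ hNM.le, Finset.sum_div]
          simp only [← div_div]
      _ = 1/D := by rw [← hDdef]; field_simp
  -- extract the single term
  have hsingle : ((k:ℝ)+1) * wtilde (k+1) - (2*((k:ℝ)+1) - qq (k+1) - qq k)
      ≤ ∑ n ∈ Finset.range M, (wtilde (n+1) * (((n:ℝ)+1) * φ (n+1)^2)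
          - (2*((n:ℝ)+1) - qq (n+1) - qq n) * φ (n+1)^2) := by
    have hmem : k ∈ Finset.range M := by simp; omega
    have hterm : ∀ n ∈ Finset.range M, 0 ≤ wtilde (n+1) * (((n:ℝ)+1) * φ (n+1)^2)
        - (2*((n:ℝ)+1) - qq (n+1) - qq n) * φ (n+1)^2 := by
      intro n _
      have h1 := hw n
      nlinarith [sq_nonneg (φ (n+1))]
    have := Finset.single_le_sum hterm hmem
    refine le_trans ?_ this
    rw [hφ1 (k+1) (by omega)]
    nlinarith [hw k]
  have : ∑ n ∈ Finset.range M, (wtilde (n+1) * (((n:ℝ)+1) * φ (n+1)^2)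
      - (2*((n:ℝ)+1) - qq (n+1) - qq n) * φ (n+1)^2)
      ≤ ∑ n ∈ Finset.range M, qq n * (φ (n+1) - φ n)^2 := by
    rw [Finset.sum_sub_distrib]
    linarith [H]
  linarith [hsingle, this, hq]

/-- If `wtilde n ≥ w n` for all `n ≥ 1`, where `w n = 2 - √((n+1)/n) - √((n-1)/n)`, and the Hardy
inequality with weight `wtilde` holds for all finitely supported complex sequences vanishing at `0`,
then `∑_{n≥1} n (wtilde n - w n) = 0`. -/
theorem sum_n_mul_diff_eq_zero (wtilde : ℕ → ℝ)
    (hge : ∀ n : ℕ, 1 ≤ n →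
      2 - Real.sqrt (((n : ℝ) + 1) / (n : ℝ)) - Real.sqrt (((n : ℝ) - 1) / (n : ℝ)) ≤ wtilde n)
    (hin : ∀ u : ℕ → ℂ, u 0 = 0 → (Function.support u).Finite →
      ∑' n : ℕ, wtilde (n + 1) * ‖u (n + 1)‖ ^ 2 ≤
        ∑' n : ℕ, ‖u (n + 1) - u n‖ ^ 2) :
    ∑' n : ℕ, ((n : ℝ) + 1) * (wtilde (n + 1) - (2 - Real.sqrt (((n : ℝ) + 2) / ((n : ℝ) + 1))
        - Real.sqrt ((n : ℝ) / ((n : ℝ) + 1)))) = 0 := by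
  have hge' : ∀ n : ℕ,
      2 - Real.sqrt (((n:ℝ)+2)/((n:ℝ)+1)) - Real.sqrt ((n:ℝ)/((n:ℝ)+1)) ≤ wtilde (n+1) := by
    intro n
    have := hge (n+1) (by omega)
    push_cast at this
    convert this using 3 <;> ring
  have hw : ∀ n : ℕ, 2*((n:ℝ)+1) - qq (n+1) - qq n ≤ ((n:ℝ)+1) * wtilde (n+1) := by
    intro n
    rw [← Bw n]
    have hpos : (0:ℝ) < (n:ℝ)+1 := by positivity
    exact mul_le_mul_of_nonneg_left (hge' n) hpos.le
  have hzero : ∀ k : ℕ, ((k:ℝ)+1) * (wtilde (k+1) - (2 - Real.sqrt (((k:ℝ)+2)/((k:ℝ)+1))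
      - Real.sqrt ((k:ℝ)/((k:ℝ)+1)))) = 0 := by
    intro k
    have hterm : ((k:ℝ)+1) * (wtilde (k+1) - (2 - Real.sqrt (((k:ℝ)+2)/((k:ℝ)+1))
        - Real.sqrt ((k:ℝ)/((k:ℝ)+1))))
        = ((k:ℝ)+1) * wtilde (k+1) - (2*((k:ℝ)+1) - qq (k+1) - qq k) := by
      rw [← Bw k]; ring
    rw [hterm]
    set e : ℝ := ((k:ℝ)+1) * wtilde (k+1) - (2*((k:ℝ)+1) - qq (k+1) - qq k) with hedef
    have he0 : 0 ≤ e := by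
      have := hw k; simp only [hedef]; linarith
    rcases eq_or_lt_of_le he0 with h | h
    · exact h.symm
    · exfalso
      -- choose M large so that 1/(Hh M - Hh (k+1)) < e
      obtain ⟨M, hM⟩ := (Filter.tendsto_atTop.mp Hh_tendsto (Hh (k+2) + 2/e)).exists
      have hM2 : k + 2 ≤ M := by
        by_contra hc
        have : Hh M ≤ Hh (k+2) := Hh_mono (by omega)
        have h2e : 0 < 2/e := by positivity
        linarith
      have hle := eps_le wtilde hin hw k (k+1) M (by omega) (by omega)
      rw [← hedef] at hle
      have hgap : 2/e ≤ Hh M - Hh (k+1) := by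
        have : Hh (k+1) ≤ Hh (k+2) := Hh_mono (by omega)
        linarith
      have hgap0 : 0 < Hh M - Hh (k+1) := lt_of_lt_of_le (by positivity) hgap
      have : 1/(Hh M - Hh (k+1)) ≤ e/2 := by
        rw [div_le_iff₀ hgap0]
        have : 2/e * (e/2) = 1 := by field_simp
        nlinarith
      linarith
  have : (fun n : ℕ => ((n:ℝ)+1) * (wtilde (n + 1) - (2 - Real.sqrt (((n:ℝ)+2)/((n:ℝ)+1))
      - Real.sqrt ((n:ℝ)/((n:ℝ)+1))))) = fun _ => (0:ℝ) := funext hzero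
  rw [this]
  exact tsum_zero
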